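/- Let D ≥ 1 be an integer, g_c := D^D/(D+1)^{D+1}, and let G_LO : [0, g_c] → ℝ assign to each g the unique solution G ∈ [1, (D+1)/D] of G = 1 + g·G^{D+1}. Then lim_{g→g_c⁻} √(1 − g/g_c) · G_LO'(g) = ((D+1)/D)^{D+2} · √(D/(2(D+1))); i.e., the derivative of G_LO diverges like (1 − g/g_c)^{−1/2} at the critical coupling. -/

import Mathlib

open Filter Set Real Topology

/-- Let `D ≥ 1`, `g_c := D^D/(D+1)^(D+1)`, and let `G_LO : [0, g_c] → ℝ` assign to
each `g` the unique solution `G ∈ [1, (D+1)/D]` of `G = 1 + g·G^(D+1)`. Then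
`lim_{g→g_c⁻} √(1 − g/g_c) · G_LO'(g) = ((D+1)/D)^(D+2) · √(D/(2(D+1)))`. -/
theorem melonic_two_point_derivative_divergence (D : ℕ) (hD : 1 ≤ D) (G_LO : ℝ → ℝ)
    (hG : ∀ g ∈ Set.Icc (0 : ℝ) ((D : ℝ) ^ D / ((D : ℝ) + 1) ^ (D + 1)),
      G_LO g ∈ Set.Icc (1 : ℝ) (((D : ℝ) + 1) / D) ∧ G_LO g = 1 + g * (G_LO g) ^ (D + 1)) :
    Filter.Tendsto
      (fun g : ℝ => Real.sqrt (1 - g / ((D : ℝ) ^ D / ((D : ℝ) + 1) ^ (D + 1))) * deriv G_LO g)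
      (nhdsWithin ((D : ℝ) ^ D / ((D : ℝ) + 1) ^ (D + 1))
        (Set.Iio ((D : ℝ) ^ D / ((D : ℝ) + 1) ^ (D + 1))))
      (nhds ((((D : ℝ) + 1) / D) ^ (D + 2) * Real.sqrt ((D : ℝ) / (2 * ((D : ℝ) + 1))))) := by
  have hD1 : (1:ℝ) ≤ (D:ℝ) := by exact_mod_cast hD
  have hD0 : (0:ℝ) < (D:ℝ) := by linarith
  set x₀ : ℝ := ((D:ℝ)+1)/D with hx₀def
  set gc : ℝ := (D:ℝ)^D/((D:ℝ)+1)^(D+1) with hgcdef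
  have hx₀1 : 1 < x₀ := by
    rw [hx₀def, lt_div_iff₀ hD0]; linarith
  have hx₀0 : 0 < x₀ := by linarith
  have hgc0 : 0 < gc := by rw [hgcdef]; positivity
  have hDx₀ : (D:ℝ) * x₀ = (D:ℝ)+1 := by
    rw [hx₀def]; field_simp
  set f : ℝ → ℝ := fun t => (t-1)/t^(D+1) with hfdef
  set F : ℝ → ℝ := fun t => ((D:ℝ)+1 - D*t)/t^(D+2) with hFdef
  have hfx₀ : f x₀ = gc := by
    have key : x₀ - 1 = gc * x₀^(D+1) := by
      rw [hx₀def, hgcdef, div_pow]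
      field_simp
      ring
    simp only [hfdef]
    rw [key, mul_div_assoc, div_self (pow_ne_zero _ hx₀0.ne'), mul_one]
  have hderiv : ∀ t : ℝ, 0 < t → HasDerivAt f (F t) t := by
    intro t ht
    have h2 : HasDerivAt (fun s:ℝ => s^(D+1)) (((D:ℝ)+1)*t^D) t := by
      simpa using hasDerivAt_pow (D+1) t
    have h1 : HasDerivAt (fun s:ℝ => s - 1) 1 t := (hasDerivAt_id t).sub_const 1
    have h3 : HasDerivAt (fun s => (s-1)/s^(D+1)) _ t := h1.div h2 (pow_ne_zero _ ht.ne')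
    convert h3 using 1
    simp only [hFdef]
    have ht' : t ≠ 0 := ht.ne'
    field_simp
    ring
  have hcontf : ContinuousOn f (Icc 1 x₀) := by
    simp only [hfdef]
    apply ContinuousOn.div (by fun_prop) (by fun_prop)
    intro t ht
    have : (0:ℝ) < t := lt_of_lt_of_le one_pos ht.1
    exact pow_ne_zero _ this.ne'
  have hmono : StrictMonoOn f (Icc 1 x₀) := by
    apply strictMonoOn_of_deriv_pos (convex_Icc 1 x₀) hcontf
    intro x hx
    rw [interior_Icc] at hx
    have hx0 : (0:ℝ) < x := lt_trans one_pos hx.1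
    rw [(hderiv x hx0).deriv]
    simp only [hFdef]
    apply div_pos
    · have : (D:ℝ)*x < (D:ℝ)*x₀ := mul_lt_mul_of_pos_left hx.2 hD0
      rw [hDx₀] at this; linarith
    · positivity
  have hGmem : ∀ g ∈ Icc (0:ℝ) gc, G_LO g ∈ Icc (1:ℝ) x₀ := fun g hg => (hG g hg).1
  have hfG : ∀ g ∈ Icc (0:ℝ) gc, f (G_LO g) = g := by
    intro g hg
    obtain ⟨⟨h1, h2⟩, heq⟩ := hG g hg
    have hpos : (0:ℝ) < G_LO g := lt_of_lt_of_le one_pos h1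
    simp only [hfdef]
    rw [div_eq_iff (pow_ne_zero _ hpos.ne')]
    linarith [heq]
  have hGlt : ∀ g ∈ Ico (0:ℝ) gc, G_LO g < x₀ := by
    intro g hg
    have hm := hGmem g ⟨hg.1, hg.2.le⟩
    rcases lt_or_eq_of_le hm.2 with h | h
    · exact h
    · exfalso
      have h2 := hfG g ⟨hg.1, hg.2.le⟩
      rw [h, hfx₀] at h2
      exact absurd h2.symm hg.2.ne
  have hcmp1 : ∀ g ∈ Icc (0:ℝ) gc, ∀ a ∈ Icc (1:ℝ) x₀, f a < g → a < G_LO g := by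
    intro g hg a ha hfa
    by_contra h
    push_neg at h
    have := hmono.monotoneOn (hGmem g hg) ha h
    rw [hfG g hg] at this
    linarith
  have hcmp2 : ∀ g ∈ Icc (0:ℝ) gc, ∀ b ∈ Icc (1:ℝ) x₀, g < f b → G_LO g < b := by
    intro g hg b hb hfb
    by_contra h
    push_neg at h
    have := hmono.monotoneOn hb (hGmem g hg) h
    rw [hfG g hg] at this
    linarith
  have hftogc : ∀ a ∈ Icc (1:ℝ) x₀, f a ≤ gc := by
    intro a ha
    have := hmono.monotoneOn ha (⟨hx₀1.le, le_refl _⟩ : x₀ ∈ Icc (1:ℝ) x₀) ha.2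
    rwa [hfx₀] at this
  have hevg : ∀ᶠ g in 𝓝[<] gc, g ∈ Ioo (0:ℝ) gc := by
    filter_upwards [eventually_nhdsWithin_of_eventually_nhds (eventually_gt_nhds hgc0),
      self_mem_nhdsWithin] with g h1 h2
    exact ⟨h1, h2⟩
  have hGtend : Tendsto G_LO (𝓝[<] gc) (𝓝 x₀) := by
    rw [tendsto_order]
    constructor
    · intro a ha
      by_cases h1 : a < 1
      · filter_upwards [hevg] with g hg
        exact lt_of_lt_of_le h1 (hGmem g ⟨hg.1.le, hg.2.le⟩).1
      · push_neg at h1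
        have haI : a ∈ Icc (1:ℝ) x₀ := ⟨h1, ha.le⟩
        have hfa : f a < gc := by
          have := hmono haI (⟨hx₀1.le, le_refl _⟩ : x₀ ∈ Icc (1:ℝ) x₀) ha
          rwa [hfx₀] at this
        filter_upwards [hevg,
          eventually_nhdsWithin_of_eventually_nhds (eventually_gt_nhds hfa)] with g hg hga
        exact hcmp1 g ⟨hg.1.le, hg.2.le⟩ a haI hga
    · intro b hb
      filter_upwards [hevg] with g hg
      exact lt_of_le_of_lt (hGmem g ⟨hg.1.le, hg.2.le⟩).2 hb
  have hGcont : ∀ g₀ ∈ Ioo (0:ℝ) gc, ContinuousAt G_LO g₀ := by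
    intro g₀ hg₀
    have hg₀I : g₀ ∈ Icc (0:ℝ) gc := ⟨hg₀.1.le, hg₀.2.le⟩
    have hGm := hGmem g₀ hg₀I
    have hev : ∀ᶠ g in 𝓝 g₀, g ∈ Ioo (0:ℝ) gc := isOpen_Ioo.eventually_mem hg₀
    unfold ContinuousAt
    rw [tendsto_order]
    constructor
    · intro a ha
      by_cases h1 : a < 1
      · filter_upwards [hev] with g hg
        exact lt_of_lt_of_le h1 (hGmem g ⟨hg.1.le, hg.2.le⟩).1
      · push_neg at h1
        have haI : a ∈ Icc (1:ℝ) x₀ := ⟨h1, le_trans ha.le hGm.2⟩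
        have hfa : f a < g₀ := by
          have := hmono haI hGm ha
          rwa [hfG g₀ hg₀I] at this
        filter_upwards [hev, eventually_gt_nhds hfa] with g hg hga
        exact hcmp1 g ⟨hg.1.le, hg.2.le⟩ a haI hga
    · intro b hb
      by_cases h1 : x₀ < b
      · filter_upwards [hev] with g hg
        exact lt_of_le_of_lt (hGmem g ⟨hg.1.le, hg.2.le⟩).2 h1
      · push_neg at h1
        have hbI : b ∈ Icc (1:ℝ) x₀ := ⟨le_trans hGm.1 hb.le, h1⟩
        have hfb : g₀ < f b := by
          have := hmono hGm hbI hb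
          rwa [hfG g₀ hg₀I] at this
        filter_upwards [hev, eventually_lt_nhds hfb] with g hg hgb
        exact hcmp2 g ⟨hg.1.le, hg.2.le⟩ b hbI hgb
  have hFpos : ∀ t ∈ Ico (1:ℝ) x₀, 0 < F t := by
    intro t ht
    have ht0 : (0:ℝ) < t := lt_of_lt_of_le one_pos ht.1
    simp only [hFdef]
    apply div_pos
    · have : (D:ℝ)*t < (D:ℝ)*x₀ := mul_lt_mul_of_pos_left ht.2 hD0
      rw [hDx₀] at this; linarith
    · positivity
  have hDerivG : ∀ g₀ ∈ Ioo (0:ℝ) gc, HasDerivAt G_LO (F (G_LO g₀))⁻¹ g₀ := by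
    intro g₀ hg₀
    have hg₀I : g₀ ∈ Icc (0:ℝ) gc := ⟨hg₀.1.le, hg₀.2.le⟩
    have hGm := hGmem g₀ hg₀I
    have hGpos : (0:ℝ) < G_LO g₀ := lt_of_lt_of_le one_pos hGm.1
    refine HasDerivAt.of_local_left_inverse (hGcont g₀ hg₀) (hderiv _ hGpos) ?_ ?_
    · exact (hFpos _ ⟨hGm.1, hGlt g₀ ⟨hg₀.1.le, hg₀.2⟩⟩).ne'
    · filter_upwards [isOpen_Ioo.eventually_mem hg₀] with g hg
      exact hfG g ⟨hg.1.le, hg.2.le⟩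
  have hevt : ∀ᶠ t in 𝓝[<] x₀, t ∈ Ioo (1:ℝ) x₀ := by
    filter_upwards [eventually_nhdsWithin_of_eventually_nhds (eventually_gt_nhds hx₀1),
      self_mem_nhdsWithin] with t h1 h2
    exact ⟨h1, h2⟩
  have hc : Tendsto (fun t => (gc - f t)/(x₀ - t)^2) (𝓝[<] x₀)
      (𝓝 ((D:ℝ)/(2*x₀^(D+2)))) := by
    apply HasDerivAt.lhopital_zero_nhdsLT (f' := fun t => -F t)
      (g' := fun t => -(2*(x₀-t)))
    · filter_upwards [hevt] with t ht
      exact HasDerivAt.const_sub gc (hderiv t (lt_trans one_pos ht.1))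
    · filter_upwards [hevt] with t ht
      have h : HasDerivAt (fun s => (x₀ - s)^2) _ t := ((hasDerivAt_id t).const_sub x₀).pow 2
      convert h using 1
      show -(2 * (x₀ - t)) = ((2:ℕ):ℝ) * (x₀ - t) ^ 1 * -1
      push_cast; ring
    · filter_upwards [hevt] with t ht
      have : (0:ℝ) < x₀ - t := by linarith [ht.2]
      simp only [neg_ne_zero]
      positivity
    · have hco : ContinuousAt f x₀ := (hderiv x₀ hx₀0).differentiableAt.continuousAt
      have h2 : Tendsto (fun t => gc - f t) (𝓝 x₀) (𝓝 (gc - f x₀)) :=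
        tendsto_const_nhds.sub hco.tendsto
      rw [hfx₀, sub_self] at h2
      exact h2.mono_left nhdsWithin_le_nhds
    · have hcont2 : Continuous (fun t:ℝ => (x₀ - t)^2) := by fun_prop
      have h2 := hcont2.tendsto x₀
      simp only [sub_self, ne_eq, OfNat.ofNat_ne_zero, not_false_eq_true, zero_pow] at h2
      exact h2.mono_left nhdsWithin_le_nhds
    · have heq : ∀ᶠ t in 𝓝[<] x₀, (D:ℝ)/(2*t^(D+2)) = (-F t)/(-(2*(x₀-t))) := by
        filter_upwards [hevt] with t ht
        have ht0 : (0:ℝ) < t := lt_trans one_pos ht.1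
        have hxt : (0:ℝ) < x₀ - t := by linarith [ht.2]
        simp only [hFdef]
        rw [neg_div_neg_eq]
        rw [div_div, div_eq_div_iff (by positivity) (by positivity)]
        linear_combination (2*t^(D+2)) * hDx₀
      refine Tendsto.congr' heq ?_
      have hcont3 : ContinuousAt (fun t:ℝ => (D:ℝ)/(2*t^(D+2))) x₀ := by
        apply ContinuousAt.div continuousAt_const (by fun_prop)
        positivity
      exact hcont3.tendsto.mono_left nhdsWithin_le_nhds
  have hΦ : Tendsto (fun t => Real.sqrt ((gc - f t)/gc) * (t^(D+2)/((D:ℝ)+1 - D*t)))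
      (𝓝[<] x₀) (𝓝 (Real.sqrt (((D:ℝ)/(2*x₀^(D+2)))/gc) * x₀^(D+2)/D)) := by
    have hN : Tendsto (fun t => Real.sqrt (((gc - f t)/(x₀-t)^2)/gc) * t^(D+2)/D)
        (𝓝[<] x₀) (𝓝 (Real.sqrt (((D:ℝ)/(2*x₀^(D+2)))/gc) * x₀^(D+2)/D)) := by
      apply Tendsto.div_const
      apply Tendsto.mul
      · exact (Real.continuous_sqrt.tendsto _).comp (hc.div_const gc)
      · exact ((continuous_pow (D+2)).tendsto x₀).mono_left nhdsWithin_le_nhds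
    refine hN.congr' ?_
    filter_upwards [hevt] with t ht
    have h0t : (0:ℝ) < x₀ - t := by linarith [ht.2]
    have hft : f t ≤ gc := hftogc t ⟨ht.1.le, ht.2.le⟩
    have hnum : 0 ≤ (gc - f t)/gc := div_nonneg (by linarith) hgc0.le
    have hD1t : (D:ℝ)+1 - D*t = D*(x₀ - t) := by rw [mul_sub, hDx₀]
    have halg : ∀ A u v : ℝ, A / u * v / (D:ℝ) = A * (v/(D*u)) := by
      intro A u v; ring
    rw [div_right_comm, Real.sqrt_div hnum, Real.sqrt_sq h0t.le, hD1t]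
    exact halg _ _ _
  have hGtend' : Tendsto G_LO (𝓝[<] gc) (𝓝[<] x₀) := by
    rw [tendsto_nhdsWithin_iff]
    refine ⟨hGtend, ?_⟩
    filter_upwards [hevg] with g hg
    exact hGlt g ⟨hg.1.le, hg.2⟩
  have hcomp : Tendsto
      (fun g => Real.sqrt ((gc - f (G_LO g))/gc) *
        ((G_LO g)^(D+2)/((D:ℝ)+1 - D*G_LO g))) (𝓝[<] gc)
      (𝓝 (Real.sqrt (((D:ℝ)/(2*x₀^(D+2)))/gc) * x₀^(D+2)/D)) :=
    hΦ.comp hGtend'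
  have hfinal : (fun g : ℝ => Real.sqrt (1 - g/gc) * deriv G_LO g) =ᶠ[𝓝[<] gc]
      (fun g => Real.sqrt ((gc - f (G_LO g))/gc) *
        ((G_LO g)^(D+2)/((D:ℝ)+1 - D*G_LO g))) := by
    filter_upwards [hevg] with g hg
    have hgI : g ∈ Icc (0:ℝ) gc := ⟨hg.1.le, hg.2.le⟩
    have h1 : deriv G_LO g = (G_LO g)^(D+2)/((D:ℝ)+1 - D*G_LO g) := by
      rw [(hDerivG g hg).deriv]
      simp only [hFdef]
      rw [inv_div]
    have h2 : 1 - g/gc = (gc - f (G_LO g))/gc := by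
      rw [hfG g hgI]
      field_simp
    rw [h1, h2]
  have hval : Real.sqrt (((D:ℝ)/(2*x₀^(D+2)))/gc) * x₀^(D+2)/D
      = x₀^(D+2) * Real.sqrt ((D:ℝ)/(2*((D:ℝ)+1))) := by
    have h1 : ((D:ℝ)/(2*x₀^(D+2)))/gc = (D:ℝ)^2 * ((D:ℝ)/(2*((D:ℝ)+1))) := by
      rw [hx₀def, hgcdef, div_pow]
      field_simp
      ring
    rw [h1, Real.sqrt_mul (by positivity), Real.sqrt_sq hD0.le]
    field_simp
  rw [← hval]
  exact Filter.Tendsto.congr' hfinal.symm hcomp
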